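/- (Corollary 2) For every fixed real number a, the function σ_a(x) := ξ(x, x+a) is log-convex in x; in particular, for all real x and y, σ_a(x)·σ_a(y) ≥ (σ_a((x+y)/2))². -/

import Mathlib

open MeasureTheory

/-- Cauchy–Schwarz for integrals. -/
lemma cs_integral {α : Type*} [MeasurableSpace α] {κ : Measure α} {f g : α → ℝ}
    (hff : Integrable (fun p => f p * f p) κ) (hgg : Integrable (fun p => g p * g p) κ)
    (hfg : Integrable (fun p => f p * g p) κ) :
    (∫ p, f p * g p ∂κ) ^ 2 ≤ (∫ p, f p * f p ∂κ) * (∫ p, g p * g p ∂κ) := by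
  set A := ∫ p, f p * f p ∂κ
  set B := ∫ p, g p * g p ∂κ
  set C := ∫ p, f p * g p ∂κ
  have h : ∀ c : ℝ, 0 ≤ A * (c * c) + (2 * C) * c + B := by
    intro c
    have h1 : Integrable (fun p => (c * f p + g p) * (c * f p + g p)) κ := by
      have : (fun p => (c * f p + g p) * (c * f p + g p))
          = fun p => (c * c) * (f p * f p) + (2 * c) * (f p * g p) + g p * g p := by
        funext p; ring
      rw [this]
      exact (((hff.const_mul _).add (hfg.const_mul _)).add hgg)
    have h2 : 0 ≤ ∫ p, (c * f p + g p) * (c * f p + g p) ∂κ :=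
      integral_nonneg fun p => mul_self_nonneg _
    have h3 : ∫ p, (c * f p + g p) * (c * f p + g p) ∂κ
        = A * (c * c) + (2 * C) * c + B := by
      have : (fun p => (c * f p + g p) * (c * f p + g p))
          = fun p => (c * c) * (f p * f p) + (2 * c) * (f p * g p) + g p * g p := by
        funext p; ring
      have i1 : Integrable (fun p => (c * c) * (f p * f p)) κ := hff.const_mul _
      have i2 : Integrable (fun p => (2 * c) * (f p * g p)) κ := hfg.const_mul _
      have i12 : Integrable (fun p => c * c * (f p * f p) + 2 * c * (f p * g p)) κ := i1.add i2
      rw [this, integral_add i12 hgg, integral_add i1 i2, integral_const_mul, integral_const_mul]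
      ring
    linarith [h3 ▸ h2]
  have := discrim_le_zero h
  rw [discrim] at this
  nlinarith [this]

lemma point_alg (w1 w2 g1 g2 : ℝ) (hw1 : 0 ≤ w1) (hw2 : 0 ≤ w2) (hg1 : 0 < g1)
    (hg2 : 0 < g2) (x y a : ℝ) :
    (Real.sqrt (w1 * w2 / 2) * ((g1 * g2) ^ (x / 2)) * |g1 ^ (a / 2) - g2 ^ (a / 2)|) *
      (Real.sqrt (w1 * w2 / 2) * ((g1 * g2) ^ (y / 2)) * |g1 ^ (a / 2) - g2 ^ (a / 2)|) =
      1 / 2 * ((w1 * g1 ^ ((x + y) / 2 + a)) * (w2 * g2 ^ ((x + y) / 2)) +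
        (w1 * g1 ^ ((x + y) / 2)) * (w2 * g2 ^ ((x + y) / 2 + a))) -
      (w1 * g1 ^ ((x + y) / 2 + a / 2)) * (w2 * g2 ^ ((x + y) / 2 + a / 2)) := by
  have hs : Real.sqrt (w1 * w2 / 2) * Real.sqrt (w1 * w2 / 2) = w1 * w2 / 2 :=
    Real.mul_self_sqrt (by positivity)
  have habs : |g1 ^ (a / 2) - g2 ^ (a / 2)| * |g1 ^ (a / 2) - g2 ^ (a / 2)|
      = (g1 ^ (a / 2) - g2 ^ (a / 2)) * (g1 ^ (a / 2) - g2 ^ (a / 2)) := abs_mul_abs_self _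
  have e1 : (g1 * g2) ^ (x / 2) * (g1 * g2) ^ (y / 2)
      = g1 ^ ((x + y) / 2) * g2 ^ ((x + y) / 2) := by
    rw [← Real.rpow_add (by positivity), show x / 2 + y / 2 = (x + y) / 2 by ring,
      Real.mul_rpow hg1.le hg2.le]
  have ha1 : g1 ^ ((x + y) / 2 + a) = g1 ^ ((x + y) / 2) * g1 ^ (a / 2) * g1 ^ (a / 2) := by
    rw [show (x + y) / 2 + a = (x + y) / 2 + a / 2 + a / 2 by ring, Real.rpow_add hg1,
      Real.rpow_add hg1]
  have ha2 : g2 ^ ((x + y) / 2 + a) = g2 ^ ((x + y) / 2) * g2 ^ (a / 2) * g2 ^ (a / 2) := by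
    rw [show (x + y) / 2 + a = (x + y) / 2 + a / 2 + a / 2 by ring, Real.rpow_add hg2,
      Real.rpow_add hg2]
  have hb1 : g1 ^ ((x + y) / 2 + a / 2) = g1 ^ ((x + y) / 2) * g1 ^ (a / 2) :=
    Real.rpow_add hg1 _ _
  have hb2 : g2 ^ ((x + y) / 2 + a / 2) = g2 ^ ((x + y) / 2) * g2 ^ (a / 2) :=
    Real.rpow_add hg2 _ _
  calc (Real.sqrt (w1 * w2 / 2) * ((g1 * g2) ^ (x / 2)) * |g1 ^ (a / 2) - g2 ^ (a / 2)|) *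
      (Real.sqrt (w1 * w2 / 2) * ((g1 * g2) ^ (y / 2)) * |g1 ^ (a / 2) - g2 ^ (a / 2)|)
      = (Real.sqrt (w1 * w2 / 2) * Real.sqrt (w1 * w2 / 2)) *
        ((g1 * g2) ^ (x / 2) * (g1 * g2) ^ (y / 2)) *
        (|g1 ^ (a / 2) - g2 ^ (a / 2)| * |g1 ^ (a / 2) - g2 ^ (a / 2)|) := by ring
    _ = (w1 * w2 / 2) * (g1 ^ ((x + y) / 2) * g2 ^ ((x + y) / 2)) *
        ((g1 ^ (a / 2) - g2 ^ (a / 2)) * (g1 ^ (a / 2) - g2 ^ (a / 2))) := by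
        rw [hs, e1, habs]
    _ = _ := by rw [ha1, ha2, hb1, hb2]; ring

lemma key_logconvex {α : Type*} [MeasurableSpace α] {κ : Measure α} [SFinite κ]
    {v G : α → ℝ} {L : ℝ → ℝ} (hv : ∀ᵐ p ∂κ, 0 ≤ v p) (hG : ∀ᵐ p ∂κ, 0 < G p)
    (hint : ∀ s : ℝ, Integrable (fun p => v p * G p ^ s) κ)
    (hL : ∀ s : ℝ, L s = ∫ p, v p * G p ^ s ∂κ) (a x y : ℝ) :
    (L ((x + y) / 2) * L ((x + y) / 2 + a) - L ((x + y) / 2 + a / 2) ^ 2) ^ 2 ≤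
      (L x * L (x + a) - L (x + a / 2) ^ 2) * (L y * L (y + a) - L (y + a / 2) ^ 2) := by
  set P := κ.prod κ with hP
  -- a.e. positivity on the product
  have hae : ∀ᵐ z ∂P, (0 ≤ v z.1 ∧ 0 < G z.1) ∧ (0 ≤ v z.2 ∧ 0 < G z.2) := by
    have h1 : ∀ᵐ z ∂P, 0 ≤ v z.1 ∧ 0 < G z.1 :=
      (Measure.quasiMeasurePreserving_fst (μ := κ) (ν := κ)).ae (hv.and hG)
    have h2 : ∀ᵐ z ∂P, 0 ≤ v z.2 ∧ 0 < G z.2 :=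
      (Measure.quasiMeasurePreserving_snd (μ := κ) (ν := κ)).ae (hv.and hG)
    exact h1.and h2
  -- the square-root kernel
  set ψ : ℝ → α × α → ℝ := fun t z =>
    Real.sqrt (v z.1 * v z.2 / 2) * ((G z.1 * G z.2) ^ (t / 2)) *
      |G z.1 ^ (a / 2) - G z.2 ^ (a / 2)| with hψ
  -- the expanded kernel
  have hid : ∀ s t : ℝ, (fun z => ψ s z * ψ t z) =ᵐ[P] (fun z =>
        1 / 2 * ((v z.1 * G z.1 ^ ((s + t) / 2 + a)) * (v z.2 * G z.2 ^ ((s + t) / 2)) +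
          (v z.1 * G z.1 ^ ((s + t) / 2)) * (v z.2 * G z.2 ^ ((s + t) / 2 + a))) -
        (v z.1 * G z.1 ^ ((s + t) / 2 + a / 2)) * (v z.2 * G z.2 ^ ((s + t) / 2 + a / 2))) := by
    intro s t
    filter_upwards [hae] with z hz
    exact point_alg _ _ _ _ hz.1.1 hz.2.1 hz.1.2 hz.2.2 s t a
  have hprodint : ∀ s t : ℝ,
      Integrable (fun z : α × α => (v z.1 * G z.1 ^ s) * (v z.2 * G z.2 ^ t)) P :=
    fun s t => (hint s).mul_prod (hint t)
  have hprodeq : ∀ s t : ℝ,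
      ∫ z, (v z.1 * G z.1 ^ s) * (v z.2 * G z.2 ^ t) ∂P = L s * L t := by
    intro s t
    rw [hL, hL]
    exact integral_prod_mul (fun p => v p * G p ^ s) (fun p => v p * G p ^ t)
  -- integrability of products of ψ's
  have hΘint : ∀ s t : ℝ, Integrable (fun z =>
      1 / 2 * ((v z.1 * G z.1 ^ ((s + t) / 2 + a)) * (v z.2 * G z.2 ^ ((s + t) / 2)) +
        (v z.1 * G z.1 ^ ((s + t) / 2)) * (v z.2 * G z.2 ^ ((s + t) / 2 + a))) -
      (v z.1 * G z.1 ^ ((s + t) / 2 + a / 2)) * (v z.2 * G z.2 ^ ((s + t) / 2 + a / 2))) P := by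
    intro s t
    exact (((hprodint _ _).add (hprodint _ _)).const_mul _).sub (hprodint _ _)
  have hψint : ∀ s t : ℝ, Integrable (fun z => ψ s z * ψ t z) P :=
    fun s t => (hΘint s t).congr (hid s t).symm
  have hψeq : ∀ s t : ℝ, ∫ z, ψ s z * ψ t z ∂P =
      L ((s + t) / 2) * L ((s + t) / 2 + a) - L ((s + t) / 2 + a / 2) ^ 2 := by
    intro s t
    rw [integral_congr_ae (hid s t)]
    have i1 := hprodint ((s + t) / 2 + a) ((s + t) / 2)
    have i2 := hprodint ((s + t) / 2) ((s + t) / 2 + a)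
    have i3 := hprodint ((s + t) / 2 + a / 2) ((s + t) / 2 + a / 2)
    have i12 : Integrable (fun z : α × α => 1 / 2 *
        ((v z.1 * G z.1 ^ ((s + t) / 2 + a)) * (v z.2 * G z.2 ^ ((s + t) / 2)) +
          (v z.1 * G z.1 ^ ((s + t) / 2)) * (v z.2 * G z.2 ^ ((s + t) / 2 + a)))) P :=
      (i1.add i2).const_mul _
    have i12' : Integrable (fun z : α × α =>
        (v z.1 * G z.1 ^ ((s + t) / 2 + a)) * (v z.2 * G z.2 ^ ((s + t) / 2)) +
          (v z.1 * G z.1 ^ ((s + t) / 2)) * (v z.2 * G z.2 ^ ((s + t) / 2 + a))) P :=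
      i1.add i2
    rw [integral_sub i12 i3, integral_const_mul, integral_add i1 i2,
      hprodeq, hprodeq, hprodeq]
    ring
  have hcs := cs_integral (hψint x x) (hψint y y) (hψint x y)
  rw [hψeq x x, hψeq y y, hψeq x y] at hcs
  have hxx : (x + x) / 2 = x := by ring
  have hyy : (y + y) / 2 = y := by ring
  rw [hxx, hyy] at hcs
  exact hcs

lemma taylor_int {m x : ℝ} (hm : 0 < m) (hx : 0 < x) (s : ℝ) :
    ∫ u in (0:ℝ)..1, (1 - u) * (x - m) ^ 2 * (m + u * (x - m)) ^ (s - 2) =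
      if s = 0 then (x - m) / m - (Real.log x - Real.log m)
      else if s = 1 then x * Real.log x - x * Real.log m - (x - m)
      else (x ^ s - m ^ s - s * m ^ (s - 1) * (x - m)) / (s * (s - 1)) := by
  rcases eq_or_ne x m with hxm | hxm
  · subst hxm
    have h0 : ∀ u : ℝ, (1 - u) * (x - x) ^ 2 * (x + u * (x - x)) ^ (s - 2) = 0 := by
      intro u; simp
    rw [intervalIntegral.integral_congr (g := fun _ => (0:ℝ)) (fun u _ => h0 u)]
    simp only [intervalIntegral.integral_const, smul_zero]
    split_ifs with h1 h2
    · simp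
    · ring
    · simp
  -- main case
  set c : ℝ := x - m with hc
  have hcne : c ≠ 0 := sub_ne_zero.mpr hxm
  have hgpos : ∀ u ∈ Set.uIcc (0:ℝ) 1, 0 < m + u * c := by
    intro u hu
    rw [Set.uIcc_of_le (by norm_num : (0:ℝ) ≤ 1)] at hu
    obtain ⟨hu0, hu1⟩ := hu
    rcases le_total 0 c with h | h
    · nlinarith
    · have : m + u * c = (1 - u) * m + u * x := by rw [hc]; ring
      rw [this]; nlinarith
  have hg : ∀ u : ℝ, HasDerivAt (fun u : ℝ => m + u * c) c u := fun u => by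
    simpa using ((hasDerivAt_id u).mul_const c).const_add m
  have hcont : IntervalIntegrable
      (fun u => (1 - u) * c ^ 2 * (m + u * c) ^ (s - 2)) volume 0 1 := by
    apply ContinuousOn.intervalIntegrable
    apply ContinuousOn.mul
    · exact (((continuous_const.sub continuous_id).mul continuous_const).continuousOn)
    · exact ContinuousOn.rpow_const
        ((continuous_const.add (continuous_id.mul continuous_const)).continuousOn)
        (fun u hu => Or.inl (ne_of_gt (hgpos u hu)))
  have he1 : m + 1 * c = x := by rw [hc]; ring
  have he0 : m + 0 * c = m := by ring
  split_ifs with h1 h2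
  · -- s = 0
    subst h1
    rw [intervalIntegral.integral_eq_sub_of_hasDerivAt (f := fun u : ℝ =>
      -x * (m + u * c)⁻¹ - Real.log (m + u * c)) (fun u hu => ?_) hcont]
    · rw [he1, he0]
      have hlx : Real.log x = Real.log x := rfl
      field_simp
      rw [hc]; ring
    · have hgu := hgpos u hu
      have hA : HasDerivAt (fun u : ℝ => (m + u * c)⁻¹)
          (-c / (m + u * c) ^ 2) u := (hg u).inv (ne_of_gt hgu)
      have hB := (hA.const_mul (-x)).sub ((hg u).log (ne_of_gt hgu))
      convert hB using 1
      · rfl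
      have hg2 : (m + u * c) ^ ((0:ℝ) - 2) = ((m + u * c) ^ 2)⁻¹ := by
        rw [show (0:ℝ) - 2 = -2 by norm_num, Real.rpow_neg hgu.le,
          show ((2:ℝ)) = ((2:ℕ):ℝ) by norm_num, Real.rpow_natCast]
      rw [hg2]
      field_simp
      rw [hc]; ring
  · -- s = 1
    subst h2
    rw [intervalIntegral.integral_eq_sub_of_hasDerivAt (f := fun u : ℝ =>
      x * Real.log (m + u * c) - c * u) (fun u hu => ?_) hcont]
    · rw [he1, he0]
      rw [hc]; ring
    · have hgu := hgpos u hu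
      have hB := (((hg u).log (ne_of_gt hgu)).const_mul x).sub
        (by simpa using (hasDerivAt_id u).const_mul c : HasDerivAt (fun u : ℝ => c * u) c u)
      convert hB using 1
      · rfl
      have hg1 : (m + u * c) ^ ((1:ℝ) - 2) = (m + u * c)⁻¹ := by
        rw [show (1:ℝ) - 2 = -1 by norm_num, Real.rpow_neg_one]
      rw [hg1]
      field_simp
      rw [hc]; ring
  · -- generic s
    have hs0 : s ≠ 0 := h1
    have hs1 : s - 1 ≠ 0 := sub_ne_zero.mpr h2
    rw [intervalIntegral.integral_eq_sub_of_hasDerivAt (f := fun u : ℝ =>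
      x * (m + u * c) ^ (s - 1) / (s - 1) - (m + u * c) ^ s / s) (fun u hu => ?_) hcont]
    · rw [he1, he0]
      have hxx : x ^ (s - 1) = x ^ s / x := by rw [Real.rpow_sub hx, Real.rpow_one]
      have hmm : m ^ (s - 1) = m ^ s / m := by rw [Real.rpow_sub hm, Real.rpow_one]
      rw [hxx, hmm]
      field_simp
      rw [hc]; ring
    · have hgu := hgpos u hu
      have hA : HasDerivAt (fun u : ℝ => (m + u * c) ^ (s - 1))
          (c * (s - 1) * (m + u * c) ^ (s - 1 - 1)) u :=
        (hg u).rpow_const (Or.inl (ne_of_gt hgu))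
      have hB : HasDerivAt (fun u : ℝ => (m + u * c) ^ s)
          (c * s * (m + u * c) ^ (s - 1)) u :=
        (hg u).rpow_const (Or.inl (ne_of_gt hgu))
      have hAB := ((hA.const_mul x).div_const (s - 1)).sub (hB.div_const s)
      convert hAB using 1
      · rfl
      have hA2 : (m + u * c) ^ (s - 1 - 1) = (m + u * c) ^ (s - 2) := by
        rw [show s - 1 - 1 = s - 2 by ring]
      have hB2 : (m + u * c) ^ (s - 1) = (m + u * c) ^ (s - 2) * (m + u * c) := by
        rw [← Real.rpow_add_one (ne_of_gt hgu), show s - 2 + 1 = s - 1 by ring]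
      rw [hA2, hB2]
      have hs1' : -1 + s ≠ 0 := fun h => hs1 (by linarith)
      field_simp
      rw [hc]; ring

lemma rpow_bound {m t u : ℝ} (hm : 0 < m) (ht : 0 < t) (hu0 : 0 < u) (hu1 : u ≤ 1) (p : ℝ) :
    (m + u * (t - m)) ^ p ≤ m ^ p + t ^ p := by
  rcases le_total m t with h | h
  · have hle : m ≤ m + u * (t - m) := by nlinarith
    have hge : m + u * (t - m) ≤ t := by nlinarith
    rcases le_total 0 p with hp | hp
    · have h1 : (m + u * (t - m)) ^ p ≤ t ^ p :=
        Real.rpow_le_rpow (by linarith) hge hp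
      have h2 : 0 ≤ m ^ p := Real.rpow_nonneg hm.le p
      linarith
    · have h1 : (m + u * (t - m)) ^ p ≤ m ^ p :=
        Real.rpow_le_rpow_of_nonpos hm hle hp
      have h2 : 0 ≤ t ^ p := Real.rpow_nonneg ht.le p
      linarith
  · have hle : t ≤ m + u * (t - m) := by nlinarith
    have hge : m + u * (t - m) ≤ m := by nlinarith
    rcases le_total 0 p with hp | hp
    · have h1 : (m + u * (t - m)) ^ p ≤ m ^ p :=
        Real.rpow_le_rpow (by linarith) hge hp
      have h2 : 0 ≤ t ^ p := Real.rpow_nonneg ht.le p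
      linarith
    · have h1 : (m + u * (t - m)) ^ p ≤ t ^ p :=
        Real.rpow_le_rpow_of_nonpos ht hle hp
      have h2 : 0 ≤ m ^ p := Real.rpow_nonneg hm.le p
      linarith

/-- The moment difference `λ_s(X)` of a positive random variable `X`. -/
noncomputable def momentLambda {Ω : Type*} [MeasurableSpace Ω] (μ : Measure Ω) (X : Ω → ℝ)
    (s : ℝ) : ℝ :=
  if s = 0 then Real.log (∫ ω, X ω ∂μ) - ∫ ω, Real.log (X ω) ∂μ
  else if s = 1 then (∫ ω, X ω * Real.log (X ω) ∂μ) - (∫ ω, X ω ∂μ) * Real.log (∫ ω, X ω ∂μ)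
  else ((∫ ω, X ω ^ s ∂μ) - (∫ ω, X ω ∂μ) ^ s) / (s * (s - 1))

/-- `ξ(s,t) := λ_s λ_t - (λ_{(s+t)/2})²`. -/
noncomputable def momentXi {Ω : Type*} [MeasurableSpace Ω] (μ : Measure Ω) (X : Ω → ℝ)
    (s t : ℝ) : ℝ :=
  momentLambda μ X s * momentLambda μ X t - (momentLambda μ X ((s + t) / 2)) ^ 2

theorem corollary2 {Ω : Type*} [MeasurableSpace Ω] (μ : Measure Ω) [IsProbabilityMeasure μ]
    (X : Ω → ℝ) (hX : Measurable X) (hpos : ∀ᵐ ω ∂μ, 0 < X ω)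
    (hmom : ∀ s : ℝ, Integrable (fun ω => X ω ^ s) μ)
    (hlog : Integrable (fun ω => Real.log (X ω)) μ)
    (hxlog : Integrable (fun ω => X ω * Real.log (X ω)) μ)
    (a : ℝ) (x y : ℝ) :
    momentXi μ X x (x + a) * momentXi μ X y (y + a) ≥
      (momentXi μ X ((x + y) / 2) ((x + y) / 2 + a)) ^ 2 := by
  classical
  have hXint : Integrable X μ := by
    have := hmom 1
    simpa [Real.rpow_one] using this
  set m := ∫ ω, X ω ∂μ with hmdef
  have hm : 0 < m := by
    by_contra h
    push_neg at h
    have h0 : m = 0 :=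
      le_antisymm h (integral_nonneg_of_ae (hpos.mono fun ω hω => hω.le))
    have hz := (integral_eq_zero_iff_of_nonneg_ae (hpos.mono fun ω hω => hω.le) hXint).mp h0
    rcases (hpos.and hz).exists with ⟨ω, h1, h2⟩
    simp only [Pi.zero_apply] at h2
    exact absurd h2 (ne_of_gt h1)
  set κ : Measure (Ω × ℝ) := μ.prod (volume.restrict (Set.Ioc (0:ℝ) 1)) with hκ
  have haeX : ∀ᵐ z ∂κ, 0 < X z.1 :=
    (Measure.quasiMeasurePreserving_fst (μ := μ)
      (ν := volume.restrict (Set.Ioc (0:ℝ) 1))).ae hpos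
  have haeU : ∀ᵐ z ∂κ, z.2 ∈ Set.Ioc (0:ℝ) 1 :=
    (Measure.quasiMeasurePreserving_snd (μ := μ)
      (ν := volume.restrict (Set.Ioc (0:ℝ) 1))).ae (ae_restrict_mem measurableSet_Ioc)
  have hae2 : ∀ᵐ z ∂κ, 0 < X z.1 ∧ z.2 ∈ Set.Ioc (0:ℝ) 1 := haeX.and haeU
  have hGpos : ∀ᵐ z ∂κ, 0 < m + z.2 * (X z.1 - m) := by
    filter_upwards [hae2] with z hz
    have hXz := hz.1
    have hu0 := hz.2.1
    have hu1 := hz.2.2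
    have h1 : 0 ≤ m * (1 - z.2) := mul_nonneg hm.le (by linarith)
    have h2 : 0 < z.2 * X z.1 := mul_pos hu0 hXz
    nlinarith
  -- integrability of the kernel
  have hFint : ∀ s : ℝ, Integrable (fun z : Ω × ℝ =>
      (1 - z.2) * (X z.1 - m) ^ 2 * (m + z.2 * (X z.1 - m)) ^ (s - 2)) κ := by
    intro s
    have hC : Integrable (fun ω => 2 * m ^ (s-2) * X ω ^ (2:ℝ) + 2 * X ω ^ s
        + 2 * m ^ 2 * m ^ (s-2) + 2 * m ^ 2 * X ω ^ (s-2)) μ := by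
      exact (((((hmom 2).const_mul _).add ((hmom s).const_mul 2)).add
        (integrable_const _)).add ((hmom (s-2)).const_mul _))
    have hBint : Integrable (fun ω => 2 * (X ω ^ (2:ℝ) + m ^ 2) * (m ^ (s-2) + X ω ^ (s-2))) μ := by
      apply hC.congr
      filter_upwards [hpos] with ω hω
      have hxx : X ω ^ (2:ℝ) * X ω ^ (s-2) = X ω ^ s := by
        rw [← Real.rpow_add hω, show (2:ℝ) + (s-2) = s by ring]
      linear_combination (-2 : ℝ) * hxx
    apply Integrable.mono'
      (g := fun z : Ω × ℝ => 2 * (X z.1 ^ (2:ℝ) + m ^ 2) * (m ^ (s-2) + X z.1 ^ (s-2)))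
    · have := hBint.mul_prod (integrable_const (1:ℝ))
        (ν := volume.restrict (Set.Ioc (0:ℝ) 1))
      simpa using this
    · exact (by fun_prop : Measurable fun z : Ω × ℝ =>
        (1 - z.2) * (X z.1 - m) ^ 2 * (m + z.2 * (X z.1 - m)) ^ (s - 2)).aestronglyMeasurable
    · filter_upwards [hae2] with z hz
      have hXz := hz.1
      have hu0 := hz.2.1
      have hu1 := hz.2.2
      have hgpos : 0 < m + z.2 * (X z.1 - m) := by
        have h1 : 0 ≤ m * (1 - z.2) := mul_nonneg hm.le (by linarith)
        have h2 : 0 < z.2 * X z.1 := mul_pos hu0 hXz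
        nlinarith
      have hb := rpow_bound hm hXz hu0 hu1 (s-2)
      have hrn : 0 ≤ (m + z.2 * (X z.1 - m)) ^ (s - 2) := Real.rpow_nonneg hgpos.le _
      have hnn : 0 ≤ (1 - z.2) * (X z.1 - m) ^ 2 * (m + z.2 * (X z.1 - m)) ^ (s - 2) := by
        apply mul_nonneg (mul_nonneg (by linarith) (sq_nonneg _)) hrn
      rw [Real.norm_eq_abs, abs_of_nonneg hnn]
      have h2 : (X z.1 - m) ^ 2 ≤ 2 * (X z.1 ^ (2:ℝ) + m ^ 2) := by
        have hre : X z.1 ^ (2:ℝ) = X z.1 ^ (2:ℕ) := by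
          rw [← Real.rpow_natCast]; norm_num
        rw [hre]
        nlinarith [sq_nonneg (X z.1 + m)]
      have e0 : 0 ≤ (X z.1 - m) ^ 2 * (m + z.2 * (X z.1 - m)) ^ (s - 2) :=
        mul_nonneg (sq_nonneg _) hrn
      have hsum : 0 ≤ m ^ (s-2) + X z.1 ^ (s-2) := by
        have := Real.rpow_nonneg hm.le (s-2)
        have := Real.rpow_nonneg hXz.le (s-2)
        linarith
      calc (1 - z.2) * (X z.1 - m) ^ 2 * (m + z.2 * (X z.1 - m)) ^ (s - 2)
          ≤ 1 * ((X z.1 - m) ^ 2 * (m + z.2 * (X z.1 - m)) ^ (s - 2)) := by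
            rw [mul_assoc]
            exact mul_le_mul_of_nonneg_right (by linarith) e0
        _ = (X z.1 - m) ^ 2 * (m + z.2 * (X z.1 - m)) ^ (s - 2) := one_mul _
        _ ≤ (X z.1 - m) ^ 2 * (m ^ (s-2) + X z.1 ^ (s-2)) :=
            mul_le_mul_of_nonneg_left hb (sq_nonneg _)
        _ ≤ 2 * (X z.1 ^ (2:ℝ) + m ^ 2) * (m ^ (s-2) + X z.1 ^ (s-2)) :=
            mul_le_mul_of_nonneg_right h2 hsum
  -- the integral identity
  have hFeq : ∀ s : ℝ, ∫ z, (1 - z.2) * (X z.1 - m) ^ 2 *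
      (m + z.2 * (X z.1 - m)) ^ (s - 2) ∂κ = momentLambda μ X s := by
    intro s
    rw [hκ, MeasureTheory.integral_prod _ (hκ ▸ hFint s)]
    by_cases hs0 : s = 0
    · subst hs0
      have inner : ∀ᵐ ω ∂μ, (∫ u, (1 - u) * (X ω - m) ^ 2 *
          (m + u * (X ω - m)) ^ ((0:ℝ) - 2) ∂(volume.restrict (Set.Ioc (0:ℝ) 1))) =
          (X ω - m) / m - (Real.log (X ω) - Real.log m) := by
        filter_upwards [hpos] with ω hω
        rw [← intervalIntegral.integral_of_le zero_le_one, taylor_int hm hω 0, if_pos rfl]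
      rw [integral_congr_ae inner]
      have i1 : Integrable (fun ω => (X ω - m) / m) μ :=
        (hXint.sub (integrable_const m)).div_const m
      have i2 : Integrable (fun ω => Real.log (X ω) - Real.log m) μ :=
        hlog.sub (integrable_const _)
      rw [integral_sub i1 i2, integral_div, integral_sub hXint (integrable_const m),
        integral_sub hlog (integrable_const _), integral_const]
      simp only [momentLambda, if_pos rfl, ← hmdef, measure_univ, probReal_univ, one_smul]
      field_simp
      simp only [if_pos trivial, integral_const, probReal_univ, one_smul]
      ring
    · by_cases hs1 : s = 1
      · subst hs1
        have inner : ∀ᵐ ω ∂μ, (∫ u, (1 - u) * (X ω - m) ^ 2 *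
            (m + u * (X ω - m)) ^ ((1:ℝ) - 2) ∂(volume.restrict (Set.Ioc (0:ℝ) 1))) =
            X ω * Real.log (X ω) - X ω * Real.log m - (X ω - m) := by
          filter_upwards [hpos] with ω hω
          rw [← intervalIntegral.integral_of_le zero_le_one, taylor_int hm hω 1,
            if_neg (one_ne_zero : (1:ℝ) ≠ 0), if_pos rfl]
        rw [integral_congr_ae inner]
        have i2 : Integrable (fun ω => X ω * Real.log m) μ := hXint.mul_const _
        have i3 : Integrable (fun ω => X ω - m) μ := hXint.sub (integrable_const m)
        have i12 : Integrable (fun ω => X ω * Real.log (X ω) - X ω * Real.log m) μ :=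
          hxlog.sub i2
        rw [integral_sub i12 i3, integral_sub hxlog i2, integral_mul_const,
          integral_sub hXint (integrable_const m), integral_const]
        simp only [momentLambda, if_neg (one_ne_zero : (1:ℝ) ≠ 0), if_pos rfl, ← hmdef,
          measure_univ, probReal_univ, one_smul]
        simp
      · have inner : ∀ᵐ ω ∂μ, (∫ u, (1 - u) * (X ω - m) ^ 2 *
            (m + u * (X ω - m)) ^ (s - 2) ∂(volume.restrict (Set.Ioc (0:ℝ) 1))) =
            (X ω ^ s - m ^ s - s * m ^ (s - 1) * (X ω - m)) / (s * (s - 1)) := by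
          filter_upwards [hpos] with ω hω
          rw [← intervalIntegral.integral_of_le zero_le_one, taylor_int hm hω s,
            if_neg hs0, if_neg hs1]
        rw [integral_congr_ae inner]
        have i1 : Integrable (fun ω => X ω ^ s - m ^ s) μ := (hmom s).sub (integrable_const _)
        have i3 : Integrable (fun ω => s * m ^ (s-1) * (X ω - m)) μ :=
          (hXint.sub (integrable_const m)).const_mul _
        rw [integral_div, integral_sub i1 i3, integral_sub (hmom s) (integrable_const _),
          integral_const_mul, integral_sub hXint (integrable_const m), integral_const,
          integral_const]
        simp only [momentLambda, if_neg hs0, if_neg hs1, ← hmdef, measure_univ,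
          probReal_univ, one_smul]
        ring
  -- set up the abstract lemma
  have hveq : ∀ s : ℝ, (fun z : Ω × ℝ =>
      (1 - z.2) * (X z.1 - m) ^ 2 * (m + z.2 * (X z.1 - m)) ^ (s - 2)) =ᵐ[κ]
      (fun z : Ω × ℝ => ((1 - z.2) * (X z.1 - m) ^ 2 * (m + z.2 * (X z.1 - m)) ^ (-2:ℝ)) *
        (m + z.2 * (X z.1 - m)) ^ s) := by
    intro s
    filter_upwards [hGpos] with z hz
    rw [show s - 2 = -2 + s by ring, Real.rpow_add hz]
    ring
  have hvint : ∀ s : ℝ, Integrable (fun z : Ω × ℝ =>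
      ((1 - z.2) * (X z.1 - m) ^ 2 * (m + z.2 * (X z.1 - m)) ^ (-2:ℝ)) *
        (m + z.2 * (X z.1 - m)) ^ s) κ :=
    fun s => (hFint s).congr (hveq s)
  have hvL : ∀ s : ℝ, momentLambda μ X s = ∫ z, ((1 - z.2) * (X z.1 - m) ^ 2 *
      (m + z.2 * (X z.1 - m)) ^ (-2:ℝ)) * (m + z.2 * (X z.1 - m)) ^ s ∂κ := by
    intro s
    rw [← hFeq s, integral_congr_ae (hveq s)]
  have hv : ∀ᵐ z ∂κ, 0 ≤ (1 - z.2) * (X z.1 - m) ^ 2 * (m + z.2 * (X z.1 - m)) ^ (-2:ℝ) := by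
    filter_upwards [hae2, hGpos] with z hz hg
    exact mul_nonneg (mul_nonneg (by linarith [hz.2.2]) (sq_nonneg _))
      (Real.rpow_nonneg hg.le _)
  have key := key_logconvex hv hGpos hvint hvL a x y
  rw [ge_iff_le, momentXi, momentXi, momentXi,
    show (x + (x + a)) / 2 = x + a/2 by ring,
    show (y + (y + a)) / 2 = y + a/2 by ring,
    show ((x+y)/2 + ((x+y)/2 + a)) / 2 = (x+y)/2 + a/2 by ring]
  exact key
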